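/- Let X be a non-negative integer-valued random variable satisfying the distributional equation X =_D (X^{(r)}+1)·B(X^{(r)}+1), where B(k) is Bernoulli(1/k). Then its probability generating function φ(s) = Σ_k s^k P(X=k) satisfies the differential equation φ'(s) = φ(s)^r for all s ∈ [0,1). -/

import Mathlib

open scoped ENNReal

/-- Law of `(j+1)·B(j+1)` : takes value `j+1` with probability `1/(j+1)` and `0` otherwise. -/
noncomputable def Bstep (j : ℕ) : PMF ℕ :=
  (PMF.bernoulli ((j + 1 : NNReal))⁻¹
      (inv_le_one_of_one_le₀ (by exact_mod_cast Nat.one_le_iff_ne_zero.mpr (Nat.succ_ne_zero j)))).map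
    (fun b => if b then j + 1 else 0)

/-- Law of the sum of `r` i.i.d. copies of a random variable with law `p`
(the `r`-fold convolution). -/
noncomputable def conv : ℕ → PMF ℕ → PMF ℕ
  | 0, _ => PMF.pure 0
  | r + 1, p => (conv r p).bind fun a => p.map fun b => a + b

/-- The sequence `X_{d,r}`: `X_{0,r} = 1` and
`X_{d,r} = (X_{d-1,r}^{(r)} + 1)·B(X_{d-1,r}^{(r)} + 1)`. -/
noncomputable def Xd : ℕ → ℕ → PMF ℕ
  | 0, _ => PMF.pure 1
  | d + 1, r => (conv r (Xd d r)).bind Bstep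

/-- The sequence `Y_{d,r}`: `Y_{0,r} = 0` and
`Y_{d,r} = ((Y_{d-1,r} + 1)·B(Y_{d-1,r} + 1))^{(r)}`. -/
noncomputable def Yd : ℕ → ℕ → PMF ℕ
  | 0, _ => PMF.pure 0
  | d + 1, r => conv r ((Yd d r).bind Bstep)


open scoped Classical

noncomputable def G (q : PMF ℕ) (x : ℝ≥0∞) : ℝ≥0∞ := ∑' k, x ^ k * q k

lemma G_le_one (q : PMF ℕ) {x : ℝ≥0∞} (hx : x ≤ 1) : G q x ≤ 1 := by
  calc G q x ≤ ∑' k, q k := ENNReal.tsum_le_tsum fun k =>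
        mul_le_of_le_one_left (by simp) (pow_le_one' hx k)
    _ = 1 := q.tsum_coe

lemma G_bind (q : PMF ℕ) (f : ℕ → PMF ℕ) (x : ℝ≥0∞) :
    G (q.bind f) x = ∑' a, q a * G (f a) x := by
  simp only [G, PMF.bind_apply]
  simp_rw [← ENNReal.tsum_mul_left]
  rw [ENNReal.tsum_comm]
  congr 1; ext a; congr 1; ext k; ring

lemma G_map (q : PMF ℕ) (a : ℕ) (x : ℝ≥0∞) :
    G (q.map fun b => a + b) x = x ^ a * G q x := by
  simp only [G, PMF.map_apply]
  simp_rw [← ENNReal.tsum_mul_left]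
  rw [ENNReal.tsum_comm]
  refine tsum_congr fun b => ?_
  rw [tsum_eq_single (a + b) (fun k hk => by simp [hk])]
  simp [pow_add, mul_assoc]

lemma G_conv (r : ℕ) (q : PMF ℕ) (x : ℝ≥0∞) : G (conv r q) x = (G q x) ^ r := by
  induction r with
  | zero =>
      simp only [conv, pow_zero, G, PMF.pure_apply]
      rw [tsum_eq_single 0 (by intro b hb; simp [hb])]
      simp
  | succ r ih =>
      rw [conv, G_bind, pow_succ, ← ih]
      simp_rw [G_map]
      calc ∑' a, (conv r q) a * (x ^ a * G q x)
          = ∑' a, (x ^ a * (conv r q) a) * G q x := by congr 1; ext a; ring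
        _ = G (conv r q) x * G q x := by rw [ENNReal.tsum_mul_right]; rfl

lemma Bstep_apply_succ (j k : ℕ) :
    Bstep j (k + 1) = if k = j then ((j : ℝ≥0∞) + 1)⁻¹ else 0 := by
  simp only [Bstep, PMF.map_apply, PMF.bernoulli_apply]
  rw [tsum_eq_single true (by intro b hb; cases b <;> simp at hb ⊢)]
  by_cases h : k = j <;> simp [h, ENNReal.coe_inv]

lemma key_rel (r : ℕ) (p : PMF ℕ) (hfix : p = (conv r p).bind Bstep) (k : ℕ) :
    ((k : ℝ≥0∞) + 1) * p (k + 1) = conv r p k := by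
  have h1 : p (k + 1) = conv r p k * ((k : ℝ≥0∞) + 1)⁻¹ := by
    conv_lhs => rw [hfix]
    rw [PMF.bind_apply]
    rw [tsum_eq_single k (by intro j hj; rw [Bstep_apply_succ, if_neg (Ne.symm hj), mul_zero])]
    rw [Bstep_apply_succ, if_pos rfl]
  rw [h1, mul_comm, mul_assoc, ENNReal.inv_mul_cancel (by simp)
    (by simp), mul_one]

lemma pgf_toReal (q : PMF ℕ) {t : ℝ} (ht : 0 ≤ t) :
    (∑' k : ℕ, t ^ k * (q k).toReal) = (G q (ENNReal.ofReal t)).toReal := by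
  rw [G, ENNReal.tsum_toReal_eq
    (fun k => ENNReal.mul_ne_top (ENNReal.pow_ne_top ENNReal.ofReal_ne_top) (q.apply_ne_top k))]
  refine tsum_congr fun k => ?_
  rw [ENNReal.toReal_mul, ← ENNReal.ofReal_pow ht, ENNReal.toReal_ofReal (pow_nonneg ht k)]


/-- If `X =_D (X^{(r)}+1)·B(X^{(r)}+1)`, then its probability generating function
`φ(s) = Σ_k s^k P(X=k)` satisfies `φ'(s) = φ(s)^r` on `[0,1)`. -/
theorem pgf_satisfies_ode (r : ℕ) (p : PMF ℕ) (hfix : p = (conv r p).bind Bstep) :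
    ∀ s ∈ Set.Ico (0 : ℝ) 1,
      HasDerivAt (fun t : ℝ => ∑' k : ℕ, t ^ k * (p k).toReal)
        ((∑' k : ℕ, s ^ k * (p k).toReal) ^ r) s := by
  rintro s ⟨hs0, hs1⟩
  set x := ENNReal.ofReal s with hxdef
  have hxle : x ≤ 1 := (ENNReal.ofReal_lt_one.mpr hs1).le
  set a : ℕ → ℝ := fun k => (p k).toReal with ha
  have ha0 : ∀ k, 0 ≤ a k := fun k => ENNReal.toReal_nonneg
  have ha1 : ∀ k, a k ≤ 1 := fun k => by
    simpa using ENNReal.toReal_mono ENNReal.one_ne_top (p.coe_le_one k)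
  set R : ℝ := (s + 1) / 2 with hR
  have hR0 : 0 < R := by positivity
  have hsR : s < R := by simp only [hR]; linarith
  have hR1 : R < 1 := by simp only [hR]; linarith
  have hmem : s ∈ Set.Ioo (-R) R := ⟨by linarith, hsR⟩
  have hu : Summable (fun n : ℕ => (n : ℝ) * R ^ n / R) := by
    have := (summable_pow_mul_geometric_of_norm_lt_one 1
      (r := R) (by rw [Real.norm_eq_abs, abs_of_pos hR0]; exact hR1)).mul_right R⁻¹
    refine this.congr fun n => ?_
    rw [pow_one, div_eq_mul_inv]
  have hder : HasDerivAt (fun t : ℝ => ∑' k : ℕ, t ^ k * a k)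
      (∑' n : ℕ, ((n : ℝ) * s ^ (n - 1)) * a n) s := by
    refine hasDerivAt_tsum_of_isPreconnected (g' := fun (n : ℕ) (y : ℝ) => ((n : ℝ) * y ^ (n - 1)) * a n) hu isOpen_Ioo isPreconnected_Ioo
      (fun n y _ => (hasDerivAt_pow n y).mul_const (a n)) ?_ hmem ?_ hmem
    · rintro n y ⟨hy1, hy2⟩
      have hyR : |y| < R := abs_lt.mpr ⟨hy1, hy2⟩
      rcases n with - | m
      · simp [hR0.le]
      · have h1 : ((m + 1 : ℕ) : ℝ) * R ^ (m + 1) / R = ((m + 1 : ℕ) : ℝ) * R ^ m := by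
          rw [pow_succ]; field_simp
        rw [h1, norm_mul, norm_mul]
        have h2 : ‖y ^ (m + 1 - 1)‖ ≤ R ^ m := by
          simpa using pow_le_pow_left₀ (abs_nonneg y) hyR.le m
        calc ‖((m + 1 : ℕ) : ℝ)‖ * ‖y ^ (m + 1 - 1)‖ * ‖a (m + 1)‖
            ≤ ((m + 1 : ℕ) : ℝ) * R ^ m * 1 := by
              apply mul_le_mul _ _ (norm_nonneg _) (by positivity)
              · apply mul_le_mul _ h2 (norm_nonneg _) (by positivity)
                simp only [Real.norm_eq_abs]
                exact le_of_eq (abs_of_nonneg (by positivity))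
              · rw [Real.norm_eq_abs, abs_of_nonneg (ha0 _)]; exact ha1 _
          _ = ((m + 1 : ℕ) : ℝ) * R ^ m := by ring
    · refine Summable.of_nonneg_of_le (fun n => mul_nonneg (pow_nonneg hs0 n) (ha0 n))
        (fun n => ?_) (summable_geometric_of_lt_one hs0 hs1)
      calc s ^ n * a n ≤ s ^ n * 1 := by
            exact mul_le_mul_of_nonneg_left (ha1 n) (pow_nonneg hs0 n)
        _ = s ^ n := mul_one _
  have hval : (∑' n : ℕ, ((n : ℝ) * s ^ (n - 1)) * a n)
      = ((∑' k : ℕ, s ^ k * a k) ^ r) := by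
    have hFne : ∀ n : ℕ, ((n : ℝ≥0∞) * x ^ (n - 1) * p n) ≠ ⊤ := fun n =>
      ENNReal.mul_ne_top (ENNReal.mul_ne_top (ENNReal.natCast_ne_top n)
        (ENNReal.pow_ne_top ENNReal.ofReal_ne_top)) (p.apply_ne_top n)
    have step1 : (∑' n : ℕ, ((n : ℝ) * s ^ (n - 1)) * a n)
        = (∑' n : ℕ, (n : ℝ≥0∞) * x ^ (n - 1) * p n).toReal := by
      rw [ENNReal.tsum_toReal_eq hFne]
      refine tsum_congr fun n => ?_
      rw [ENNReal.toReal_mul, ENNReal.toReal_mul, ENNReal.toReal_natCast,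
        ← ENNReal.ofReal_pow hs0, ENNReal.toReal_ofReal (pow_nonneg hs0 _)]
    have step2 : (∑' n : ℕ, (n : ℝ≥0∞) * x ^ (n - 1) * p n) = G (conv r p) x := by
      rw [tsum_eq_zero_add' ENNReal.summable]
      simp only [Nat.cast_zero, zero_mul, zero_add]
      rw [G]
      refine tsum_congr fun n => ?_
      have : ((n + 1 : ℕ) : ℝ≥0∞) = (n : ℝ≥0∞) + 1 := by push_cast; rfl
      rw [this, Nat.add_sub_cancel, mul_comm ((n : ℝ≥0∞) + 1) (x ^ n), mul_assoc,
        key_rel r p hfix n]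
    rw [step1, step2, G_conv, pgf_toReal p hs0, ← ENNReal.toReal_pow]
  rw [← hval]
  exact hder
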